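/- arXiv:1304.0036 — 3 statements merged into one kernel-verified Lean document; each statement's English description precedes it below -/
import Mathlib

section
/- Let d, d' be integers with 2 ≤ d < d', and let Δ ∈ [-log d, log d]. Then M(Δ, d') ≤ M(Δ, d), and the inequality is strict whenever Δ ≠ 0. -/
open scoped ENNReal BigOperators

noncomputable section

/-- Binary entropy (natural log), with Lean's convention `Real.log 0 = 0`. -/
def binEntropy' (x : ℝ) : ℝ := -(x * Real.log x) - (1 - x) * Real.log (1 - x)

/-- Binary relative entropy, valued in `[0,∞]`. -/
def binRelEntropy (x y : ℝ) : ℝ≥0∞ :=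
  if (y = 0 ∧ 0 < x) ∨ (y = 1 ∧ x < 1) then ⊤
  else ENNReal.ofReal (x * Real.log (x / y) + (1 - x) * Real.log ((1 - x) / (1 - y)))

/-- `M(Δ,d)`: infimum of binary relative entropies under the entropy-difference constraint. -/
def Mfun (Δ : ℝ) (d : ℕ) : ℝ≥0∞ :=
  sInf {m : ℝ≥0∞ | ∃ s r : ℝ, s ∈ Set.Icc (0:ℝ) (((d:ℝ) - 1) / d) ∧
    r ∈ Set.Icc (0:ℝ) (((d:ℝ) - 1) / d) ∧
    binEntropy' s - binEntropy' r + (s - r) * Real.log ((d:ℝ) - 1) = Δ ∧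
    m = binRelEntropy s r}

/-- Shannon entropy of a probability vector on `Fin d` (natural log). -/
def shEntropy {d : ℕ} (p : Fin d → ℝ) : ℝ := ∑ i, -(p i * Real.log (p i))

/-- Relative entropy between probability vectors on `Fin d`, valued in `[0,∞]`. -/
def relEntropy {d : ℕ} (p q : Fin d → ℝ) : ℝ≥0∞ :=
  if ∀ i, q i = 0 → p i = 0
  then ENNReal.ofReal (∑ i, p i * Real.log (p i / q i))
  else ⊤

/-- `N(d) = sup_{0<r<1/2} r(1-r) (log(((1-r)/r)(d-1)))²`. -/
def Nfun (d : ℕ) : ℝ :=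
  sSup {v : ℝ | ∃ r : ℝ, 0 < r ∧ r < 1/2 ∧
    v = r * (1 - r) * (Real.log ((1 - r) / r * ((d:ℝ) - 1)))^2}

open Real Set

lemma binEntropy'_eq (x : ℝ) : binEntropy' x = Real.binEntropy x := by
  simp only [binEntropy', Real.binEntropy, Real.log_inv]; ring

lemma constraint_eq (d : ℕ) (s r : ℝ) :
    binEntropy' s - binEntropy' r + (s - r) * Real.log ((d:ℝ) - 1)
      = qaryEntropy d s - qaryEntropy d r := by
  simp only [binEntropy'_eq, Real.qaryEntropy]
  push_cast
  ring

/-- expanded relative entropy -/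
def Efun (s r : ℝ) : ℝ :=
  s * Real.log s - s * Real.log r + (1 - s) * Real.log (1 - s) - (1 - s) * Real.log (1 - r)

lemma Efun_self (r : ℝ) : Efun r r = 0 := by simp [Efun]

lemma mul_log_div (x y : ℝ) (hx : 0 ≤ x) (hy : 0 < y) :
    x * Real.log (x / y) = x * Real.log x - x * Real.log y := by
  rcases eq_or_lt_of_le hx with h | h
  · simp [← h]
  · rw [Real.log_div h.ne' hy.ne']; ring

lemma qaryEntropy_top (d : ℕ) (hd : 2 ≤ d) :
    qaryEntropy d (1 - 1/(d:ℝ)) = Real.log d := by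
  have hd0 : (0:ℝ) < d := by positivity
  have hd1 : (1:ℝ) ≤ (d:ℝ) - 1 := by
    have : (2:ℝ) ≤ d := by exact_mod_cast hd
    linarith
  have h1 : (1:ℝ) - 1/(d:ℝ) = ((d:ℝ) - 1)/d := by field_simp
  have h2 : (1:ℝ) - ((d:ℝ)-1)/d = 1/d := by field_simp; ring
  rw [Real.qaryEntropy, Real.binEntropy, h1, h2]
  push_cast
  rw [inv_div, one_div, inv_inv, Real.log_div hd0.ne' (by linarith : ((d:ℝ)-1) ≠ 0)]
  field_simp
  ring

lemma Efun_strictMonoOn_left {r b : ℝ} (hr : 0 < r) (hb : b < 1) (hrb : r ≤ b) :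
    StrictMonoOn (fun s => Efun s r) (Icc r b) := by
  have hcont : ContinuousOn (fun s => Efun s r) (Icc r b) := by
    apply ContinuousOn.sub
    apply ContinuousOn.add
    apply ContinuousOn.sub
    · exact (Real.continuous_mul_log).continuousOn
    · exact (continuous_id.mul continuous_const).continuousOn
    · exact ((Real.continuous_mul_log).comp (continuous_const.sub continuous_id)).continuousOn
    · exact ((continuous_const.sub continuous_id).mul continuous_const).continuousOn
  apply strictMonoOn_of_deriv_pos (convex_Icc r b) hcont
  intro s hs
  rw [interior_Icc] at hs
  have hs0 : 0 < s := lt_of_le_of_lt hr.le hs.1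
  have hs1 : s < 1 := lt_of_lt_of_le hs.2 hb.le
  have hder : HasDerivAt (fun s => Efun s r)
      ((Real.log s + 1) - Real.log r + (-(Real.log (1-s) + 1)) - (-(Real.log (1 - r)))) s := by
    unfold Efun
    apply HasDerivAt.sub
    apply HasDerivAt.add
    apply HasDerivAt.sub
    · exact Real.hasDerivAt_mul_log hs0.ne'
    · simpa using (hasDerivAt_id s).mul_const (Real.log r)
    · have h1 : HasDerivAt (fun s : ℝ => 1 - s) (-1) s := by
        simpa using (hasDerivAt_id s).const_sub 1
      have := (Real.hasDerivAt_mul_log (x := 1 - s) (by linarith)).comp s h1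
      exact this.congr_deriv (by ring)
    · have h1 : HasDerivAt (fun s : ℝ => 1 - s) (-1) s := by
        simpa using (hasDerivAt_id s).const_sub 1
      simpa [mul_comm] using h1.mul_const (Real.log (1 - r))
  rw [hder.deriv]
  have h2 : Real.log r < Real.log s := Real.log_lt_log hr hs.1
  have h3 : Real.log (1 - s) < Real.log (1 - r) := Real.log_lt_log (by linarith) (by linarith [hs.1])
  linarith

/-- strict monotonicity of `Efun` in the second argument above the diagonal -/
lemma Efun_strictMonoOn_right {s b : ℝ} (hs : 0 ≤ s) (hb : b < 1) (hsb : s ≤ b) :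
    StrictMonoOn (fun r => Efun s r) (Icc s b) := by
  rcases eq_or_lt_of_le hs with h0 | h0
  · -- s = 0
    have hE : ∀ r : ℝ, Efun 0 r = -Real.log (1 - r) := by
      intro r; simp [Efun]
    rw [← h0]
    intro x hx y hy hxy
    simp only [hE]
    have : Real.log (1 - y) < Real.log (1 - x) := Real.log_lt_log (by linarith [hy.2]) (by linarith)
    linarith
  · -- s > 0
    have hcont : ContinuousOn (fun r => Efun s r) (Icc s b) := by
      apply ContinuousOn.sub
      apply ContinuousOn.add
      apply ContinuousOn.sub
      · exact continuousOn_const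
      · apply ContinuousOn.mul continuousOn_const
        apply Real.continuousOn_log.mono
        intro x hx; simp; linarith [hx.1]
      · exact continuousOn_const
      · apply ContinuousOn.mul continuousOn_const
        apply ContinuousOn.comp Real.continuousOn_log
        · exact (continuous_const.sub continuous_id).continuousOn
        · intro x hx; simp only [Set.mem_compl_iff, Set.mem_singleton_iff]
          have := hx.2; simp; linarith
    apply strictMonoOn_of_deriv_pos (convex_Icc s b) hcont
    intro r hrr
    rw [interior_Icc] at hrr
    have hr0 : 0 < r := lt_of_le_of_lt h0.le hrr.1
    have hr1 : r < 1 := lt_of_lt_of_le hrr.2 hb.le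
    have hder : HasDerivAt (fun r => Efun s r)
        (0 - s * r⁻¹ + 0 - (1 - s) * ((1 - r)⁻¹ * -1)) r := by
      unfold Efun
      apply HasDerivAt.sub
      apply HasDerivAt.add
      apply HasDerivAt.sub
      · exact hasDerivAt_const _ _
      · exact (Real.hasDerivAt_log hr0.ne').const_mul s
      · exact hasDerivAt_const _ _
      · have h1 : HasDerivAt (fun r : ℝ => 1 - r) (-1) r := by
          simpa using (hasDerivAt_id r).const_sub 1
        have h2 : HasDerivAt (fun r : ℝ => Real.log (1 - r)) ((1 - r)⁻¹ * -1) r :=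
          (Real.hasDerivAt_log (by intro h; linarith [sub_eq_zero.mp h] : (1:ℝ) - r ≠ 0)).comp r h1
        exact h2.const_mul (1 - s)
    rw [hder.deriv]
    have hne1 : (1:ℝ) - r ≠ 0 := by intro h; linarith [sub_eq_zero.mp h]
    have hkey : 0 - s * r⁻¹ + 0 - (1 - s) * ((1 - r)⁻¹ * -1) = (r - s) / (r * (1 - r)) := by
      field_simp [hr0.ne', hne1]
      ring
    rw [hkey]
    apply div_pos (by linarith [hrr.1]) (mul_pos hr0 (by linarith))


lemma binRelEntropy_eq (s r : ℝ) (hs0 : 0 ≤ s) (hs1 : s ≤ 1) (hr0 : 0 < r) (hr1 : r < 1) :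
    binRelEntropy s r = ENNReal.ofReal (Efun s r) := by
  rw [binRelEntropy, if_neg]
  · rw [mul_log_div s r hs0 hr0, mul_log_div (1 - s) (1 - r) (by linarith) (by linarith)]
    congr 1
    unfold Efun
    ring
  · rintro (⟨h, -⟩ | ⟨h, -⟩)
    · exact hr0.ne' h
    · exact hr1.ne h

lemma binRelEntropy_zero_right (s : ℝ) (hs : 0 < s) : binRelEntropy s 0 = ⊤ := by
  rw [binRelEntropy, if_pos (Or.inl ⟨rfl, hs⟩)]

lemma exists_qary (d : ℕ) {a b y : ℝ} (hab : a ≤ b)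
    (hy : y ∈ Icc (qaryEntropy d a) (qaryEntropy d b)) :
    ∃ x ∈ Icc a b, qaryEntropy d x = y := by
  obtain ⟨x, hx, hfx⟩ := intermediate_value_Icc hab (Real.qaryEntropy_continuous.continuousOn) hy
  exact ⟨x, hx, hfx⟩

lemma qary_gap (d d' : ℕ) (x : ℝ) : qaryEntropy d' x
    = qaryEntropy d x + x * (Real.log ((d':ℝ) - 1) - Real.log ((d:ℝ) - 1)) := by
  unfold qaryEntropy
  push_cast
  ring

lemma improve (d d' : ℕ) (hd : 2 ≤ d) (hdd' : d < d') (s r : ℝ)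
    (hs : s ∈ Icc 0 (1 - 1/(d:ℝ))) (hr : r ∈ Icc 0 (1 - 1/(d:ℝ))) (hne : s ≠ r) :
    ∃ s' r' : ℝ, s' ∈ Icc 0 (1 - 1/(d':ℝ)) ∧ r' ∈ Icc 0 (1 - 1/(d':ℝ)) ∧
      qaryEntropy d' s' - qaryEntropy d' r' = qaryEntropy d s - qaryEntropy d r ∧
      binRelEntropy s' r' ≤ binRelEntropy s r ∧
      (binRelEntropy s r ≠ ⊤ → binRelEntropy s' r' < binRelEntropy s r) := by
  have hd' : 2 ≤ d' := le_trans hd hdd'.le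
  have hdR : (2:ℝ) ≤ d := by exact_mod_cast hd
  have hdR' : (2:ℝ) ≤ d' := by exact_mod_cast hd'
  have hddR : (d:ℝ) < d' := by exact_mod_cast hdd'
  have hd0 : (0:ℝ) < d := by linarith
  have hd0' : (0:ℝ) < d' := by linarith
  have htt : 1 - 1/(d:ℝ) ≤ 1 - 1/(d':ℝ) := by
    have : 1/(d':ℝ) ≤ 1/(d:ℝ) := by
      apply one_div_le_one_div_of_le hd0 hddR.le
    linarith
  have htd0' : (0:ℝ) < 1 - 1/(d':ℝ) := by
    have : 1/(d':ℝ) ≤ 1/2 := by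
      apply one_div_le_one_div_of_le <;> norm_num <;> linarith
    linarith
  have htd1 : 1 - 1/(d:ℝ) < 1 := by
    have : 0 < 1/(d:ℝ) := by positivity
    linarith
  have htd1' : 1 - 1/(d':ℝ) < 1 := by
    have : 0 < 1/(d':ℝ) := by positivity
    linarith
  have hL : Real.log ((d:ℝ) - 1) < Real.log ((d':ℝ) - 1) :=
    Real.log_lt_log (by linarith) (by linarith)
  have hmono : StrictMonoOn (qaryEntropy d) (Icc 0 (1 - 1/(d:ℝ))) :=
    Real.qaryEntropy_strictMonoOn hd
  have hmono' : StrictMonoOn (qaryEntropy d') (Icc 0 (1 - 1/(d':ℝ))) :=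
    Real.qaryEntropy_strictMonoOn hd'
  have hsub : Icc (0:ℝ) (1 - 1/(d:ℝ)) ⊆ Icc 0 (1 - 1/(d':ℝ)) := Icc_subset_Icc le_rfl htt
  rcases lt_or_gt_of_ne hne with hsr | hsr
  · -- s < r : shrink r to r'
    have hr0 : 0 < r := lt_of_le_of_lt hs.1 hsr
    have hD0 : qaryEntropy d s - qaryEntropy d r < 0 := by
      have := hmono hs hr hsr
      linarith
    set Δ₀ := qaryEntropy d s - qaryEntropy d r with hΔ₀
    have hgap : qaryEntropy d' s - qaryEntropy d' r < Δ₀ := by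
      rw [qary_gap d d' s, qary_gap d d' r]
      have : (s - r) * (Real.log ((d':ℝ) - 1) - Real.log ((d:ℝ) - 1)) < 0 :=
        mul_neg_of_neg_of_pos (by linarith) (by linarith)
      simp only [hΔ₀]
      nlinarith
    have h0 : qaryEntropy d' s < qaryEntropy d' s - Δ₀ := by linarith
    have h1 : qaryEntropy d' s - Δ₀ ≤ qaryEntropy d' r := by linarith
    obtain ⟨r', hr'mem, hr'eq⟩ := exists_qary d' hsr.le ⟨h0.le, h1⟩
    have hr'ne : s ≠ r' := by
      intro h; rw [← h] at hr'eq; linarith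
    have hsr' : s < r' := lt_of_le_of_ne hr'mem.1 hr'ne
    have hr'1 : r' < 1 := lt_of_le_of_lt hr'mem.2 (lt_of_le_of_lt hr.2 htd1)
    have hr'0 : 0 < r' := lt_of_le_of_lt hs.1 hsr'
    have hmemr' : r' ∈ Icc (0:ℝ) (1 - 1/(d':ℝ)) :=
      ⟨le_trans hs.1 hr'mem.1, le_trans hr'mem.2 (le_trans hr.2 htt)⟩
    refine ⟨s, r', hsub hs, hmemr', by linarith, ?_, fun _ => ?_⟩
    all_goals {
      have hEmono := Efun_strictMonoOn_right hs.1 (lt_of_le_of_lt hr.2 htd1) (le_of_lt hsr)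
      have hx1 : s ∈ Icc s r := ⟨le_refl s, hsr.le⟩
      have hx2 : r' ∈ Icc s r := ⟨hsr'.le, hr'mem.2⟩
      have hx3 : r ∈ Icc s r := ⟨hsr.le, le_refl r⟩
      have e1 : Efun s s < Efun s r' := hEmono hx1 hx2 hsr'
      have e2 : Efun s r' < Efun s r := hEmono hx2 hx3 (lt_of_le_of_ne hr'mem.2 (by
        intro h; rw [h] at hr'eq; linarith))
      rw [Efun_self] at e1
      rw [binRelEntropy_eq s r' hs.1 (by linarith [hs.2, htd1]) hr'0 hr'1,
        binRelEntropy_eq s r hs.1 (by linarith [hs.2, htd1]) hr0 (lt_of_le_of_lt hr.2 htd1)]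
      first
      | exact le_of_lt ((ENNReal.ofReal_lt_ofReal_iff (by linarith)).mpr e2)
      | exact (ENNReal.ofReal_lt_ofReal_iff (by linarith)).mpr e2
    }
  · -- r < s : shrink s to s'
    have hs0 : 0 < s := lt_of_le_of_lt hr.1 hsr
    have hs1 : s < 1 := lt_of_le_of_lt hs.2 htd1
    have hD0 : 0 < qaryEntropy d s - qaryEntropy d r := by
      have := hmono hr hs hsr
      linarith
    set Δ₀ := qaryEntropy d s - qaryEntropy d r with hΔ₀
    have hgap : Δ₀ < qaryEntropy d' s - qaryEntropy d' r := by
      rw [qary_gap d d' s, qary_gap d d' r]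
      have : 0 < (s - r) * (Real.log ((d':ℝ) - 1) - Real.log ((d:ℝ) - 1)) :=
        mul_pos (by linarith) (by linarith)
      simp only [hΔ₀]
      nlinarith
    have h0 : qaryEntropy d' r < qaryEntropy d' r + Δ₀ := by linarith
    have h1 : qaryEntropy d' r + Δ₀ ≤ qaryEntropy d' s := by linarith
    obtain ⟨s', hs'mem, hs'eq⟩ := exists_qary d' hsr.le ⟨h0.le, h1⟩
    have hs'ne : r ≠ s' := by
      intro h; rw [← h] at hs'eq; linarith
    have hrs' : r < s' := lt_of_le_of_ne hs'mem.1 hs'ne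
    have hmems' : s' ∈ Icc (0:ℝ) (1 - 1/(d':ℝ)) :=
      ⟨le_trans hr.1 hs'mem.1, le_trans hs'mem.2 (le_trans hs.2 htt)⟩
    have hcon : qaryEntropy d' s' - qaryEntropy d' r = Δ₀ := by linarith
    rcases eq_or_lt_of_le hr.1 with hreq | hr0
    · -- r = 0 : both sides ⊤
      have hr0 : r = 0 := hreq.symm
      subst hr0
      have hs'0 : 0 < s' := hrs'
      refine ⟨s', 0, hmems', ⟨le_refl 0, htd0'.le⟩, hcon, ?_, ?_⟩
      · rw [binRelEntropy_zero_right s' hs'0, binRelEntropy_zero_right s hs0]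
      · intro h
        exact absurd (binRelEntropy_zero_right s hs0) h
    · refine ⟨s', r, hmems', hsub hr, hcon, ?_, fun _ => ?_⟩
      all_goals {
        have hEmono := Efun_strictMonoOn_left hr0 hs1 hsr.le
        have hx1 : r ∈ Icc r s := ⟨le_refl r, hsr.le⟩
        have hx2 : s' ∈ Icc r s := ⟨hrs'.le, hs'mem.2⟩
        have hx3 : s ∈ Icc r s := ⟨hsr.le, le_refl s⟩
        have e1 : Efun r r < Efun s' r := hEmono hx1 hx2 hrs'
        have e2 : Efun s' r < Efun s r := hEmono hx2 hx3 (lt_of_le_of_ne hs'mem.2 (by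
          intro h; rw [h] at hs'eq; linarith))
        rw [Efun_self] at e1
        have hr1 : r < 1 := lt_of_le_of_lt hr.2 htd1
        rw [binRelEntropy_eq s' r (by linarith [hr.1, hrs'.le]) (by linarith [hs'mem.2]) hr0 hr1,
          binRelEntropy_eq s r (hr.1.trans hsr.le) hs1.le hr0 hr1]
        first
        | exact le_of_lt ((ENNReal.ofReal_lt_ofReal_iff (by linarith)).mpr e2)
        | exact (ENNReal.ofReal_lt_ofReal_iff (by linarith)).mpr e2
      }


lemma mul_log_ge {x : ℝ} (hx : 0 ≤ x) : -1 ≤ x * Real.log x := by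
  rcases eq_or_lt_of_le hx with h | h
  · simp [← h]
  · have h1 := Real.log_le_sub_one_of_pos (inv_pos.mpr h)
    rw [Real.log_inv] at h1
    have h2 : 1 - x⁻¹ ≤ Real.log x := by linarith
    have h3 : x * (1 - x⁻¹) ≤ x * Real.log x := mul_le_mul_of_nonneg_left h2 hx
    have h4 : x * (1 - x⁻¹) = x - 1 := by field_simp
    linarith

lemma Efun_lower {s r : ℝ} (hs0 : 0 ≤ s) (hs1 : s ≤ 1) (hr0 : 0 < r) (hr1 : r < 1) :
    s * (-Real.log r) - 2 ≤ Efun s r := by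
  have h1 : -1 ≤ s * Real.log s := mul_log_ge hs0
  have h2 : -1 ≤ (1 - s) * Real.log (1 - s) := mul_log_ge (by linarith)
  have h3 : Real.log (1 - r) ≤ 0 := Real.log_nonpos (by linarith) (by linarith)
  have h4 : (1 - s) * Real.log (1 - r) ≤ 0 := mul_nonpos_of_nonneg_of_nonpos (by linarith) h3
  unfold Efun
  nlinarith

lemma binRel_zero_zero : binRelEntropy 0 0 = 0 := by
  rw [binRelEntropy, if_neg]
  · norm_num
  · rintro (⟨-, h⟩ | ⟨h, -⟩)
    · exact lt_irrefl 0 h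
    · norm_num at h

def Sset (Δ : ℝ) (d : ℕ) : Set ℝ≥0∞ :=
  {m : ℝ≥0∞ | ∃ s r : ℝ, s ∈ Set.Icc (0:ℝ) (1 - 1/(d:ℝ)) ∧
    r ∈ Set.Icc (0:ℝ) (1 - 1/(d:ℝ)) ∧
    qaryEntropy d s - qaryEntropy d r = Δ ∧
    m = binRelEntropy s r}

lemma Mfun_eq (Δ : ℝ) (d : ℕ) (hd : 2 ≤ d) : Mfun Δ d = sInf (Sset Δ d) := by
  have hd0 : (0:ℝ) < d := by positivity
  have h1 : ((d:ℝ) - 1) / d = 1 - 1/(d:ℝ) := by field_simp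
  unfold Mfun Sset
  congr 1
  ext m
  simp only [Set.mem_setOf_eq, h1, constraint_eq]

/-- `M(Δ,·)` is decreasing in the dimension, strictly so for `Δ ≠ 0`. -/
theorem Mfun_antitone_dim (d d' : ℕ) (hd : 2 ≤ d) (hdd' : d < d')
    (Δ : ℝ) (hΔ : Δ ∈ Set.Icc (-Real.log d) (Real.log d)) :
    Mfun Δ d' ≤ Mfun Δ d ∧ (Δ ≠ 0 → Mfun Δ d' < Mfun Δ d) := by
  have hd' : 2 ≤ d' := le_trans hd hdd'.le
  have hdR : (2:ℝ) ≤ d := by exact_mod_cast hd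
  have hdR' : (2:ℝ) ≤ d' := by exact_mod_cast hd'
  have hddR : (d:ℝ) < d' := by exact_mod_cast hdd'
  have hd0 : (0:ℝ) < d := by linarith
  have hd0' : (0:ℝ) < d' := by linarith
  have htd0 : (0:ℝ) < 1 - 1/(d:ℝ) := by
    have : 1/(d:ℝ) ≤ 1/2 := by
      apply one_div_le_one_div_of_le <;> norm_num <;> linarith
    linarith
  have htd0' : (0:ℝ) < 1 - 1/(d':ℝ) := by
    have : 1/(d':ℝ) ≤ 1/2 := by
      apply one_div_le_one_div_of_le <;> norm_num <;> linarith
    linarith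
  have htd1 : 1 - 1/(d:ℝ) < 1 := by
    have : 0 < 1/(d:ℝ) := by positivity
    linarith
  have htd1' : 1 - 1/(d':ℝ) < 1 := by
    have : 0 < 1/(d':ℝ) := by positivity
    linarith
  have hlogdd : Real.log d < Real.log d' := Real.log_lt_log (by linarith) hddR
  have hmono : StrictMonoOn (qaryEntropy d) (Icc 0 (1 - 1/(d:ℝ))) :=
    Real.qaryEntropy_strictMonoOn hd
  rw [Mfun_eq Δ d hd, Mfun_eq Δ d' hd']
  -- Part A
  have partA : sInf (Sset Δ d') ≤ sInf (Sset Δ d) := by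
    apply sInf_le_sInf_of_isCoinitialFor
    rintro m ⟨s, r, hs, hr, hcon, rfl⟩
    by_cases hsr : s = r
    · subst hsr
      have hΔ0 : Δ = 0 := by rw [← hcon]; ring
      refine ⟨0, ⟨0, 0, ⟨le_refl 0, htd0'.le⟩, ⟨le_refl 0, htd0'.le⟩, by
        simp [hΔ0], binRel_zero_zero.symm⟩, zero_le⟩
    · obtain ⟨s', r', h1, h2, h3, h4, -⟩ := improve d d' hd hdd' s r hs hr hsr
      exact ⟨binRelEntropy s' r', ⟨s', r', h1, h2, by rw [h3, hcon], rfl⟩, h4⟩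
  refine ⟨partA, fun hΔne => ?_⟩
  -- Part B
  by_cases hAtop : sInf (Sset Δ d) = ⊤
  · -- construct a finite feasible value for d'
    rw [hAtop]
    have : ∃ s r : ℝ, s ∈ Icc (0:ℝ) (1 - 1/(d':ℝ)) ∧ r ∈ Icc (0:ℝ) (1 - 1/(d':ℝ)) ∧
        qaryEntropy d' s - qaryEntropy d' r = Δ ∧ binRelEntropy s r ≠ ⊤ := by
      rcases lt_or_gt_of_ne hΔne with hneg | hpos
      · -- Δ < 0 : take s = 0
        obtain ⟨r, hrmem, hreq⟩ := exists_qary d' htd0'.le (y := -Δ) (by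
          rw [qaryEntropy_zero, qaryEntropy_top d' hd']
          exact ⟨by linarith, by linarith [hΔ.1]⟩)
        have hr0 : 0 < r := by
          rcases eq_or_lt_of_le hrmem.1 with h | h
          · exfalso; rw [← h, qaryEntropy_zero] at hreq; linarith
          · exact h
        refine ⟨0, r, ⟨le_refl 0, htd0'.le⟩, hrmem, by rw [qaryEntropy_zero, hreq]; ring, ?_⟩
        rw [binRelEntropy_eq 0 r (le_refl 0) zero_le_one hr0 (lt_of_le_of_lt hrmem.2 htd1')]
        exact ENNReal.ofReal_ne_top
      · -- Δ > 0
        have hc : 0 < Real.log d' - Δ := by linarith [hΔ.2]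

        have hld' : 0 < Real.log d' := Real.log_pos (by linarith)
        set y := min (Real.log d' - Δ) (Real.log d') / 2 with hy
        have hy0 : 0 < y := by positivity
        have hyc : y < Real.log d' - Δ := by
          simp only [hy]
          rcases le_total (Real.log d' - Δ) (Real.log d') with h | h
          · rw [min_eq_left h]; linarith
          · rw [min_eq_right h]; linarith
        have hyd : y ≤ Real.log d' := by
          have h := min_le_right (Real.log d' - Δ) (Real.log d')
          simp only [hy]; linarith
        obtain ⟨r, hrmem, hreq⟩ := exists_qary d' htd0'.le (y := y) (by
          rw [qaryEntropy_zero, qaryEntropy_top d' hd']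
          exact ⟨hy0.le, hyd⟩)
        have hr0 : 0 < r := by
          rcases eq_or_lt_of_le hrmem.1 with h | h
          · exfalso; rw [← h, qaryEntropy_zero] at hreq; linarith
          · exact h
        obtain ⟨s, hsmem, hseq⟩ := exists_qary d' hrmem.2 (y := qaryEntropy d' r + Δ) (by
          rw [qaryEntropy_top d' hd']
          exact ⟨by linarith, by rw [hreq]; linarith⟩)
        refine ⟨s, r, ⟨le_trans hrmem.1 hsmem.1, hsmem.2⟩, hrmem, by rw [hseq]; ring, ?_⟩
        rw [binRelEntropy_eq s r (le_trans hrmem.1 hsmem.1)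
          (le_of_lt (lt_of_le_of_lt hsmem.2 htd1')) hr0 (lt_of_le_of_lt hrmem.2 htd1')]
        exact ENNReal.ofReal_ne_top
    obtain ⟨s, r, hs, hr, hcon, hfin⟩ := this
    exact lt_of_le_of_lt (sInf_le ⟨s, r, hs, hr, hcon, rfl⟩) (lt_top_iff_ne_top.mpr hfin)
  · -- finite infimum case
    set B : ℝ := (sInf (Sset Δ d)).toReal + 1 with hBdef
    have hB0 : (0:ℝ) < B := by
      have := ENNReal.toReal_nonneg (a := sInf (Sset Δ d))
      simp only [hBdef]; linarith
    have hAB : sInf (Sset Δ d) < ENNReal.ofReal B := by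
      conv_lhs => rw [← ENNReal.ofReal_toReal hAtop]
      rw [ENNReal.ofReal_lt_ofReal_iff hB0]
      simp only [hBdef]; linarith
    -- the truncation radius
    obtain ⟨ρ, hρpos, hρ⟩ : ∃ ρ : ℝ, 0 < ρ ∧ ∀ s r : ℝ, s ∈ Icc (0:ℝ) (1 - 1/(d:ℝ)) →
        r ∈ Icc (0:ℝ) (1 - 1/(d:ℝ)) → qaryEntropy d s - qaryEntropy d r = Δ → r < ρ →
        ENNReal.ofReal B ≤ binRelEntropy s r := by
      rcases lt_or_gt_of_ne hΔne with hneg | hpos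
      · -- Δ < 0 : vacuous since r is bounded below
        obtain ⟨rΔ, hrΔmem, hrΔeq⟩ := exists_qary d htd0.le (y := -Δ) (by
          rw [qaryEntropy_zero, qaryEntropy_top d hd]
          exact ⟨by linarith, by linarith [hΔ.1]⟩)
        have hrΔ0 : 0 < rΔ := by
          rcases eq_or_lt_of_le hrΔmem.1 with h | h
          · exfalso; rw [← h, qaryEntropy_zero] at hrΔeq; linarith
          · exact h
        refine ⟨rΔ, hrΔ0, fun s r hs hr hcon hrlt => absurd ?_ (not_lt.mpr (le_refl (0:ℝ≥0∞)))⟩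
        exfalso
        have h1 : qaryEntropy d r < qaryEntropy d rΔ := hmono hr hrΔmem hrlt
        have h2 : 0 ≤ qaryEntropy d s :=
          Real.qaryEntropy_nonneg hs.1 (le_of_lt (lt_of_le_of_lt hs.2 htd1))
        linarith
      · -- Δ > 0
        obtain ⟨sΔ, hsΔmem, hsΔeq⟩ := exists_qary d htd0.le (y := Δ) (by
          rw [qaryEntropy_zero, qaryEntropy_top d hd]
          exact ⟨hpos.le, hΔ.2⟩)
        have hsΔ0 : 0 < sΔ := by
          rcases eq_or_lt_of_le hsΔmem.1 with h | h
          · exfalso; rw [← h, qaryEntropy_zero] at hsΔeq; linarith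
          · exact h
        refine ⟨Real.exp (-(B + 2)/sΔ), Real.exp_pos _, fun s r hs hr hcon hrlt => ?_⟩
        have hsl : sΔ ≤ s := by
          by_contra h
          push_neg at h
          have h1 : qaryEntropy d s < qaryEntropy d sΔ := hmono hs hsΔmem h
          have h2 : 0 ≤ qaryEntropy d r :=
            Real.qaryEntropy_nonneg hr.1 (le_of_lt (lt_of_le_of_lt hr.2 htd1))
          linarith
        have hs0 : 0 < s := lt_of_lt_of_le hsΔ0 hsl
        rcases eq_or_lt_of_le hr.1 with h | hr0
        · rw [← h, binRelEntropy_zero_right s hs0]; exact le_top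
        · rw [binRelEntropy_eq s r hs.1 (le_of_lt (lt_of_le_of_lt hs.2 htd1)) hr0
            (lt_of_le_of_lt hr.2 htd1)]
          apply ENNReal.ofReal_le_ofReal
          have hlog : Real.log r < -(B + 2)/sΔ := by
            have := Real.log_lt_log hr0 hrlt
            rwa [Real.log_exp] at this
          rw [neg_div] at hlog
          have hkey : B + 2 ≤ s * (-Real.log r) := by
            have h5 : (B + 2)/sΔ ≤ -Real.log r := by linarith
            have h6 : 0 < (B + 2)/sΔ := by positivity
            calc B + 2 = (B + 2)/sΔ * sΔ := (div_mul_cancel₀ _ hsΔ0.ne').symm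
            _ ≤ (B + 2)/sΔ * s := mul_le_mul_of_nonneg_left hsl h6.le
            _ ≤ -Real.log r * s := mul_le_mul_of_nonneg_right h5 hs0.le
            _ = s * (-Real.log r) := mul_comm _ _
          have := Efun_lower hs.1 (le_of_lt (lt_of_le_of_lt hs.2 htd1)) hr0
            (lt_of_le_of_lt hr.2 htd1)
          linarith
    obtain ⟨m₁, hm₁S, hm₁lt⟩ := sInf_lt_iff.mp hAB
    obtain ⟨s₁, r₁, hs₁, hr₁, hcon₁, rfl⟩ := hm₁S
    have hr₁ρ : ρ ≤ r₁ := by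
      by_contra h
      push_neg at h
      exact absurd hm₁lt (not_lt.mpr (hρ s₁ r₁ hs₁ hr₁ hcon₁ h))
    have hr₁0 : 0 < r₁ := lt_of_lt_of_le hρpos hr₁ρ
    have hr₁1 : r₁ < 1 := lt_of_le_of_lt hr₁.2 htd1
    have hs₁1 : s₁ ≤ 1 := le_of_lt (lt_of_le_of_lt hs₁.2 htd1)
    set K : Set (ℝ × ℝ) :=
      (Icc (0:ℝ) (1 - 1/(d:ℝ)) ×ˢ Icc ρ (1 - 1/(d:ℝ))) ∩
        {p : ℝ × ℝ | qaryEntropy d p.1 - qaryEntropy d p.2 = Δ} with hKdef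
    have hKmem₁ : (s₁, r₁) ∈ K := ⟨⟨hs₁, hr₁ρ, hr₁.2⟩, hcon₁⟩
    have hKcomp : IsCompact K := by
      apply (isCompact_Icc.prod isCompact_Icc).inter_right
      exact isClosed_eq ((Real.qaryEntropy_continuous.comp continuous_fst).sub
        (Real.qaryEntropy_continuous.comp continuous_snd)) continuous_const
    have hsubK : ∀ p : ℝ × ℝ, p ∈ K → 0 < p.2 ∧ p.2 < 1 := by
      rintro ⟨a, b⟩ ⟨⟨-, hb⟩, -⟩
      exact ⟨lt_of_lt_of_le hρpos hb.1, lt_of_le_of_lt hb.2 htd1⟩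
    have hKcont : ContinuousOn (fun p : ℝ × ℝ => Efun p.1 p.2) K := by
      have c1 : Continuous fun p : ℝ × ℝ => p.1 * Real.log p.1 :=
        Real.continuous_mul_log.comp continuous_fst
      have c3 : Continuous fun p : ℝ × ℝ => (1 - p.1) * Real.log (1 - p.1) :=
        Real.continuous_mul_log.comp (continuous_const.sub continuous_fst)
      have c2 : ContinuousOn (fun p : ℝ × ℝ => p.1 * Real.log p.2) K := by
        apply ContinuousOn.mul continuous_fst.continuousOn
        apply ContinuousOn.comp Real.continuousOn_log continuous_snd.continuousOn
        intro p hp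
        simp only [Set.mem_compl_iff, Set.mem_singleton_iff]
        exact ne_of_gt (hsubK p hp).1
      have c4 : ContinuousOn (fun p : ℝ × ℝ => (1 - p.1) * Real.log (1 - p.2)) K := by
        apply ContinuousOn.mul (continuous_const.sub continuous_fst).continuousOn
        apply ContinuousOn.comp Real.continuousOn_log
          (continuous_const.sub continuous_snd).continuousOn
        intro p hp
        simp only [Set.mem_compl_iff, Set.mem_singleton_iff]
        have := (hsubK p hp).2
        intro hc
        have : (1:ℝ) - p.2 = 0 := hc
        linarith
      exact ((c1.continuousOn.sub c2).add c3.continuousOn).sub c4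
    obtain ⟨p₂, hp₂K, hp₂min⟩ := hKcomp.exists_isMinOn ⟨(s₁, r₁), hKmem₁⟩ hKcont
    obtain ⟨s₂, r₂⟩ := p₂
    have hs₂ : s₂ ∈ Icc (0:ℝ) (1 - 1/(d:ℝ)) := hp₂K.1.1
    have hr₂ρ : ρ ≤ r₂ := hp₂K.1.2.1
    have hr₂t : r₂ ≤ 1 - 1/(d:ℝ) := hp₂K.1.2.2
    have hcon₂ : qaryEntropy d s₂ - qaryEntropy d r₂ = Δ := hp₂K.2
    have hr₂0 : 0 < r₂ := lt_of_lt_of_le hρpos hr₂ρ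
    have hr₂1 : r₂ < 1 := lt_of_le_of_lt hr₂t htd1
    have hs₂1 : s₂ ≤ 1 := le_of_lt (lt_of_le_of_lt hs₂.2 htd1)
    have hval₂ : binRelEntropy s₂ r₂ = ENNReal.ofReal (Efun s₂ r₂) :=
      binRelEntropy_eq _ _ hs₂.1 hs₂1 hr₂0 hr₂1
    have hval₁ : binRelEntropy s₁ r₁ = ENNReal.ofReal (Efun s₁ r₁) :=
      binRelEntropy_eq _ _ hs₁.1 hs₁1 hr₁0 hr₁1
    have hE₁B : Efun s₁ r₁ < B := by
      by_contra h
      push_neg at h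
      rw [hval₁] at hm₁lt
      exact absurd hm₁lt (not_lt.mpr (ENNReal.ofReal_le_ofReal h))
    have hE₂B : Efun s₂ r₂ < B := lt_of_le_of_lt (isMinOn_iff.mp hp₂min _ hKmem₁) hE₁B
    have hge : sInf (Sset Δ d) ≤ ENNReal.ofReal (Efun s₂ r₂) :=
      sInf_le ⟨s₂, r₂, hs₂, ⟨le_trans hρpos.le hr₂ρ, hr₂t⟩, hcon₂, hval₂.symm⟩
    have hle : ENNReal.ofReal (Efun s₂ r₂) ≤ sInf (Sset Δ d) := by
      apply le_sInf
      rintro m ⟨s, r, hs, hr, hcon, rfl⟩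
      rcases lt_or_ge r ρ with h | h
      · exact le_trans (ENNReal.ofReal_le_ofReal hE₂B.le) (hρ s r hs hr hcon h)
      · have hmem : (s, r) ∈ K := ⟨⟨hs, h, hr.2⟩, hcon⟩
        rw [binRelEntropy_eq s r hs.1 (le_of_lt (lt_of_le_of_lt hs.2 htd1))
          (lt_of_lt_of_le hρpos h) (lt_of_le_of_lt hr.2 htd1)]
        exact ENNReal.ofReal_le_ofReal (isMinOn_iff.mp hp₂min _ hmem)
    have hA : sInf (Sset Δ d) = ENNReal.ofReal (Efun s₂ r₂) := le_antisymm hge hle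
    have hne₂ : s₂ ≠ r₂ := by
      intro h
      rw [h, sub_self] at hcon₂
      exact hΔne hcon₂.symm
    obtain ⟨s', r', h1, h2, h3, -, h5⟩ :=
      improve d d' hd hdd' s₂ r₂ hs₂ ⟨le_trans hρpos.le hr₂ρ, hr₂t⟩ hne₂
    have h6 := h5 (by rw [hval₂]; exact ENNReal.ofReal_ne_top)
    calc sInf (Sset Δ d') ≤ binRelEntropy s' r' :=
          sInf_le ⟨s', r', h1, h2, by rw [h3, hcon₂], rfl⟩
    _ < binRelEntropy s₂ r₂ := h6
    _ = sInf (Sset Δ d) := by rw [hval₂, hA]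

end
end

section
/- Let d ≥ 2 be an integer and let Δ ∈ [-log d, 0]. Then M(Δ,d) ≤ -Δ, and the inequality is strict for every Δ ∈ (-log d, 0). -/
open scoped ENNReal BigOperators

noncomputable section

/-- Auxiliary: continuity of `r ↦ H₂(r) + r c`. -/
lemma aux_cont (c : ℝ) : Continuous fun r : ℝ => binEntropy' r + r * c := by
  unfold binEntropy'
  have h1 : Continuous fun r : ℝ => r * Real.log r := Real.continuous_mul_log
  have h2 : Continuous fun r : ℝ => (1 - r) * Real.log (1 - r) :=
    Real.continuous_mul_log.comp (continuous_const.sub continuous_id)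
  fun_prop

lemma aux_zero : binEntropy' 0 = 0 := by
  unfold binEntropy'; simp

/-- Auxiliary: value at the right endpoint. -/
lemma aux_top (d : ℕ) (hd : 2 ≤ d) :
    binEntropy' (((d:ℝ)-1)/d) + (((d:ℝ)-1)/d) * Real.log ((d:ℝ)-1) = Real.log d := by
  have hd1 : (1:ℝ) < (d:ℝ) := by exact_mod_cast Nat.lt_of_lt_of_le one_lt_two hd
  have h1 : (1:ℝ) - ((d:ℝ)-1)/d = 1/d := by field_simp; ring
  have hlp : Real.log (((d:ℝ)-1)/d) = Real.log ((d:ℝ)-1) - Real.log d :=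
    Real.log_div (by linarith) (by linarith)
  have hl1 : Real.log ((1:ℝ)/d) = -Real.log d := by rw [one_div, Real.log_inv]
  unfold binEntropy'
  rw [h1, hlp, hl1]
  have h2 : ((d:ℝ)-1)/d + 1/d = 1 := by field_simp; ring
  linear_combination (Real.log (d:ℝ)) * h2

/-- Key real inequality: for `0 < r ≤ (d-1)/d`,
`-log(1-r) ≤ H₂(r) + r log(d-1)`, strictly if `r < (d-1)/d`. -/
lemma aux_key (d : ℕ) (hd : 2 ≤ d) (r : ℝ) (_hr0 : 0 < r) (hr1 : r ≤ ((d:ℝ)-1)/d) :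
    binEntropy' r + r * Real.log ((d:ℝ)-1) + Real.log (1-r)
      = r * (Real.log ((1-r)*((d:ℝ)-1)) - Real.log r) := by
  have hd1 : (1:ℝ) < (d:ℝ) := by exact_mod_cast Nat.lt_of_lt_of_le one_lt_two hd
  have hdd : ((d:ℝ)-1)/d < 1 := by
    rw [div_lt_one (by linarith)]; linarith
  have h1r : 0 < 1 - r := by linarith [lt_of_le_of_lt hr1 hdd]
  have hmul : Real.log ((1-r)*((d:ℝ)-1)) = Real.log (1-r) + Real.log ((d:ℝ)-1) :=
    Real.log_mul (by linarith) (by linarith)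
  unfold binEntropy'
  rw [hmul]; ring

/-- for `Δ ∈ [-log d, 0]`, `M(Δ,d) ≤ -Δ`, strictly on the interior. -/
theorem Mfun_le_neg (d : ℕ) (hd : 2 ≤ d) (Δ : ℝ)
    (hΔ : Δ ∈ Set.Icc (-Real.log d) 0) :
    Mfun Δ d ≤ ENNReal.ofReal (-Δ) ∧
    (Δ ∈ Set.Ioo (-Real.log d) 0 → Mfun Δ d < ENNReal.ofReal (-Δ)) := by
  obtain ⟨hΔl, hΔu⟩ := hΔ
  have hd1 : (1:ℝ) < (d:ℝ) := by exact_mod_cast Nat.lt_of_lt_of_le one_lt_two hd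
  have hp0 : (0:ℝ) ≤ ((d:ℝ)-1)/d := div_nonneg (by linarith) (by linarith)
  have hpd : ((d:ℝ)-1)/d < 1 := by rw [div_lt_one (by linarith)]; linarith
  set f : ℝ → ℝ := fun r => binEntropy' r + r * Real.log ((d:ℝ)-1) with hf
  -- existence of r with f r = -Δ via IVT
  have himg : Set.Icc (f 0) (f (((d:ℝ)-1)/d)) ⊆ f '' Set.Icc 0 (((d:ℝ)-1)/d) :=
    intermediate_value_Icc hp0 ((aux_cont _).continuousOn)
  have hf0 : f 0 = 0 := by simp [hf, aux_zero]
  have hftop : f (((d:ℝ)-1)/d) = Real.log d := aux_top d hd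
  have hmem : -Δ ∈ Set.Icc (f 0) (f (((d:ℝ)-1)/d)) := by
    rw [hf0, hftop]; constructor <;> linarith
  obtain ⟨r, hrIcc, hfr⟩ := himg hmem
  obtain ⟨hr0, hr1⟩ := hrIcc
  have hr1' : r < 1 := lt_of_le_of_lt hr1 hpd
  -- the membership witness (s = 0, r)
  have hconstraint : binEntropy' 0 - binEntropy' r + (0 - r) * Real.log ((d:ℝ)-1) = Δ := by
    rw [aux_zero]
    have : binEntropy' r + r * Real.log ((d:ℝ)-1) = -Δ := hfr
    linarith [this]
  have hMle : Mfun Δ d ≤ binRelEntropy 0 r := by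
    apply sInf_le
    exact ⟨0, r, ⟨le_refl 0, hp0⟩, ⟨hr0, hr1⟩, hconstraint, rfl⟩
  have hval : binRelEntropy 0 r = ENNReal.ofReal (-Real.log (1-r)) := by
    unfold binRelEntropy
    rw [if_neg]
    · congr 1
      have : ((1:ℝ)-0)/(1-r) = (1-r)⁻¹ := by rw [sub_zero, one_div]
      rw [this, Real.log_inv]
      ring
    · rintro (⟨_, h⟩ | ⟨h1, _⟩)
      · exact lt_irrefl 0 h
      · linarith
  constructor
  · -- non-strict part
    have hfr' : binEntropy' r + r * Real.log ((d:ℝ)-1) = -Δ := hfr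
    rcases eq_or_lt_of_le hr0 with heq | hpos
    · -- r = 0
      calc Mfun Δ d ≤ binRelEntropy 0 r := hMle
        _ = ENNReal.ofReal (-Real.log (1-r)) := hval
        _ ≤ ENNReal.ofReal (-Δ) := by rw [← heq]; simp
    · have hkey := aux_key d hd r hpos hr1
      have h1r : 0 < 1 - r := by linarith
      have hlog : Real.log r ≤ Real.log ((1-r)*((d:ℝ)-1)) := by
        apply Real.log_le_log hpos
        have hm : r * (d:ℝ) ≤ (d:ℝ) - 1 := (le_div_iff₀ (by linarith)).mp hr1
        nlinarith
      have hnn : 0 ≤ r * (Real.log ((1-r)*((d:ℝ)-1)) - Real.log r) :=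
        mul_nonneg hpos.le (sub_nonneg.mpr hlog)
      have hineq : -Real.log (1-r) ≤ -Δ := by linarith
      calc Mfun Δ d ≤ binRelEntropy 0 r := hMle
        _ = ENNReal.ofReal (-Real.log (1-r)) := hval
        _ ≤ ENNReal.ofReal (-Δ) := ENNReal.ofReal_le_ofReal hineq
  · rintro ⟨hΔl', hΔu'⟩
    have hnegΔ : 0 < -Δ := by linarith
    have hpos : 0 < r := by
      rcases eq_or_lt_of_le hr0 with heq | h
      · exfalso; rw [← heq] at hfr; rw [hf0] at hfr; linarith
      · exact h
    have hrlt : r < ((d:ℝ)-1)/d := by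
      rcases lt_or_eq_of_le hr1 with h | heq
      · exact h
      · exfalso; rw [heq] at hfr; rw [hftop] at hfr; linarith
    have hfr' : binEntropy' r + r * Real.log ((d:ℝ)-1) = -Δ := hfr
    have hkey := aux_key d hd r hpos hr1
    have h1r : 0 < 1 - r := by linarith
    have hlog : Real.log r < Real.log ((1-r)*((d:ℝ)-1)) := by
      apply Real.log_lt_log hpos
      have hm : r * (d:ℝ) < (d:ℝ) - 1 := (lt_div_iff₀ (by linarith)).mp hrlt
      nlinarith
    have hpp : 0 < r * (Real.log ((1-r)*((d:ℝ)-1)) - Real.log r) :=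
      mul_pos hpos (sub_pos.mpr hlog)
    have hineq : -Real.log (1-r) < -Δ := by linarith
    calc Mfun Δ d ≤ binRelEntropy 0 r := hMle
      _ = ENNReal.ofReal (-Real.log (1-r)) := hval
      _ < ENNReal.ofReal (-Δ) := by
          exact (ENNReal.ofReal_lt_ofReal_iff hnegΔ).mpr hineq

end
end

section
/- Let d ≥ 2 be an integer and let s, r ∈ [0,(d-1)/d]. Set Δ(s,r) = H₂(s) - H₂(r) + (s-r)·log(d-1). Then D₂(s‖r) ≥ N(d)·(exp(Δ(s,r)/N(d)) - 1 - Δ(s,r)/N(d)) (an inequality in [0,∞]). -/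
open scoped ENNReal BigOperators

noncomputable section

-- derivative of f x = binEntropy' x + x * c
lemma hasDerivAt_fc (c : ℝ) {x : ℝ} (hx0 : 0 < x) (hx1 : x < 1) :
    HasDerivAt (fun y => binEntropy' y + y * c)
      (Real.log (1 - x) - Real.log x + c) x := by
  have h1 : HasDerivAt (fun y : ℝ => y * Real.log y) (Real.log x + 1) x :=
    Real.hasDerivAt_mul_log hx0.ne'
  have hu : HasDerivAt (fun y : ℝ => 1 - y) (-1) x := (hasDerivAt_id x).const_sub 1
  have h2 : HasDerivAt (fun y : ℝ => (1 - y) * Real.log (1 - y))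
      ((Real.log (1 - x) + 1) * (-1)) x :=
    (Real.hasDerivAt_mul_log (by linarith : (1:ℝ) - x ≠ 0)).comp x hu
  have h3 : HasDerivAt (fun y : ℝ => y * c) c x := by simpa using (hasDerivAt_id x).mul_const c
  have := (h1.neg.sub h2).add h3
  refine this.congr_deriv ?_
  ring

-- derivative of f' x = log(1-x) - log x + c
lemma hasDerivAt_fc' (c : ℝ) {x : ℝ} (hx0 : 0 < x) (hx1 : x < 1) :
    HasDerivAt (fun y => Real.log (1 - y) - Real.log y + c)
      (-(1 - x)⁻¹ - x⁻¹) x := by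
  have hu : HasDerivAt (fun y : ℝ => 1 - y) (-1) x := (hasDerivAt_id x).const_sub 1
  have h1 : HasDerivAt (fun y : ℝ => Real.log (1 - y)) ((1 - x)⁻¹ * (-1)) x :=
    (Real.hasDerivAt_log (by linarith : (1:ℝ) - x ≠ 0)).comp x hu
  have h2 : HasDerivAt Real.log x⁻¹ x := Real.hasDerivAt_log hx0.ne'
  have := (h1.sub h2).add_const c
  refine this.congr_deriv ?_
  ring


lemma w_antitone (c N : ℝ) (hN : 0 < N)
    (hNs : ∀ x : ℝ, 0 < x → x < 1 →
      x * (1 - x) * (Real.log (1 - x) - Real.log x + c)^2 ≤ N) :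
    AntitoneOn (fun x => Real.exp ((binEntropy' x + x * c) / N) *
      (Real.log (1 - x) - Real.log x + c)) (Set.Ioo 0 1) := by
  set w : ℝ → ℝ := fun x => Real.exp ((binEntropy' x + x * c) / N) *
      (Real.log (1 - x) - Real.log x + c) with hw
  have hder : ∀ x ∈ Set.Ioo (0:ℝ) 1, HasDerivAt w
      (Real.exp ((binEntropy' x + x * c) / N) *
        ((Real.log (1 - x) - Real.log x + c) / N * (Real.log (1 - x) - Real.log x + c)
          + (-(1 - x)⁻¹ - x⁻¹))) x := by
    rintro x ⟨hx0, hx1⟩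
    have h1 : HasDerivAt (fun y => Real.exp ((binEntropy' y + y * c) / N))
        (Real.exp ((binEntropy' x + x * c) / N) * ((Real.log (1 - x) - Real.log x + c) / N)) x :=
      ((hasDerivAt_fc c hx0 hx1).div_const N).exp
    have h2 := hasDerivAt_fc' c hx0 hx1
    have := h1.mul h2
    refine this.congr_deriv ?_
    ring
  apply antitoneOn_of_deriv_nonpos (convex_Ioo 0 1)
  · exact fun x hx => ((hder x hx).continuousAt).continuousWithinAt
  · rw [interior_Ioo]
    exact fun x hx => ((hder x hx).differentiableAt).differentiableWithinAt
  · rw [interior_Ioo]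
    rintro x hx
    obtain ⟨hx0, hx1⟩ := hx
    rw [(hder x ⟨hx0, hx1⟩).deriv]
    have hE : 0 < Real.exp ((binEntropy' x + x * c) / N) := Real.exp_pos _
    have key : (Real.log (1 - x) - Real.log x + c) / N * (Real.log (1 - x) - Real.log x + c)
        + (-(1 - x)⁻¹ - x⁻¹) ≤ 0 := by
      have h := hNs x hx0 hx1
      have hx1' : (0:ℝ) < 1 - x := by linarith
      rw [div_mul_eq_mul_div, ← sq]
      rw [div_add' _ _ _ hN.ne']
      rw [div_nonpos_iff]
      right
      constructor
      · have e1 : (-(1 - x)⁻¹ - x⁻¹) = -(x * (1-x))⁻¹ := by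
          field_simp
          ring
        rw [e1]
        have hpos : (0:ℝ) < x * (1 - x) := by positivity
        calc (Real.log (1 - x) - Real.log x + c)^2 + -(x * (1-x))⁻¹ * N
            = ((x * (1-x)) * (Real.log (1 - x) - Real.log x + c)^2 - N) / (x * (1-x)) := by
              field_simp; ring
          _ ≤ 0 := div_nonpos_of_nonpos_of_nonneg (by linarith) hpos.le
      · exact hN.le
    exact mul_nonpos_of_nonneg_of_nonpos hE.le key

lemma key (c N : ℝ) (hN : 0 < N)
    (hNs : ∀ x : ℝ, 0 < x → x < 1 →
      x * (1 - x) * (Real.log (1 - x) - Real.log x + c)^2 ≤ N)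
    (s r : ℝ) (hs0 : 0 ≤ s) (hs1 : s < 1) (hr0 : 0 < r) (hr1 : r < 1) :
    N * (Real.exp ((binEntropy' s - binEntropy' r + (s - r) * c) / N) - 1
        - (binEntropy' s - binEntropy' r + (s - r) * c) / N)
      ≤ s * Real.log (s / r) + (1 - s) * Real.log ((1 - s) / (1 - r)) := by
  set f : ℝ → ℝ := fun x => binEntropy' x + x * c with hf
  set D : ℝ → ℝ := fun x => x * Real.log x - x * Real.log r
      + (1 - x) * Real.log (1 - x) - (1 - x) * Real.log (1 - r) with hD
  set ψ : ℝ → ℝ := fun x =>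
    D x - N * (Real.exp ((f x - f r) / N) - 1 - (f x - f r) / N) with hψ
  -- Step 1: rewrite RHS as D s
  have hRHS : s * Real.log (s / r) + (1 - s) * Real.log ((1 - s) / (1 - r)) = D s := by
    rcases eq_or_lt_of_le hs0 with h0 | h0
    · simp only [hD, ← h0]
      rw [Real.log_div (by norm_num) (by linarith : (1:ℝ) - r ≠ 0)]
      simp
    · rw [Real.log_div h0.ne' hr0.ne',
        Real.log_div (by linarith : (1:ℝ) - s ≠ 0) (by linarith : (1:ℝ) - r ≠ 0)]
      simp only [hD]; ring
  -- Step 2: rewrite Δ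
  have hΔ : binEntropy' s - binEntropy' r + (s - r) * c = f s - f r := by
    simp only [hf]; ring
  rw [hRHS, hΔ, ← sub_nonneg]
  show 0 ≤ ψ s
  -- ψ r = 0
  have hψr : ψ r = 0 := by simp [hψ, hD]
  -- continuity of ψ
  have cml : Continuous (fun x : ℝ => x * Real.log x) := Real.continuous_mul_log
  have cml1 : Continuous (fun x : ℝ => (1 - x) * Real.log (1 - x)) :=
    cml.comp (continuous_const.sub continuous_id)
  have contf : Continuous f := by
    have : Continuous (fun x : ℝ => -(x * Real.log x) - (1 - x) * Real.log (1 - x) + x * c) :=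
      (cml.neg.sub cml1).add (continuous_id.mul continuous_const)
    exact this
  have contD : Continuous D := by
    have : Continuous (fun x : ℝ => x * Real.log x - x * Real.log r
        + (1 - x) * Real.log (1 - x) - (1 - x) * Real.log (1 - r)) :=
      ((cml.sub (continuous_id.mul continuous_const)).add cml1).sub
        ((continuous_const.sub continuous_id).mul continuous_const)
    exact this
  have contψ : Continuous ψ :=
    contD.sub (continuous_const.mul ((((contf.sub continuous_const).div_const N).rexp.sub
      continuous_const).sub ((contf.sub continuous_const).div_const N)))
  -- derivative of ψ on (0,1)
  have hders : ∀ x ∈ Set.Ioo (0:ℝ) 1, HasDerivAt ψ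
      ((Real.log (1 - r) - Real.log r + c)
        - Real.exp ((f x - f r) / N) * (Real.log (1 - x) - Real.log x + c)) x := by
    rintro x ⟨hx0, hx1⟩
    have hfd : HasDerivAt f (Real.log (1 - x) - Real.log x + c) x := hasDerivAt_fc c hx0 hx1
    have hDd : HasDerivAt D
        (Real.log x - Real.log (1 - x) - Real.log r + Real.log (1 - r)) x := by
      have h1 : HasDerivAt (fun y : ℝ => y * Real.log y) (Real.log x + 1) x :=
        Real.hasDerivAt_mul_log hx0.ne'
      have hu : HasDerivAt (fun y : ℝ => 1 - y) (-1) x := (hasDerivAt_id x).const_sub 1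
      have h2 : HasDerivAt (fun y : ℝ => (1 - y) * Real.log (1 - y))
          ((Real.log (1 - x) + 1) * (-1)) x :=
        (Real.hasDerivAt_mul_log (by linarith : (1:ℝ) - x ≠ 0)).comp x hu
      have h3 : HasDerivAt (fun y : ℝ => y * Real.log r) (Real.log r) x := by
        simpa using (hasDerivAt_id x).mul_const (Real.log r)
      have h4 : HasDerivAt (fun y : ℝ => (1 - y) * Real.log (1 - r)) (-Real.log (1 - r)) x := by
        simpa using hu.mul_const (Real.log (1 - r))
      have := ((h1.sub h3).add h2).sub h4
      refine this.congr_deriv ?_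
      ring
    have hΔd : HasDerivAt (fun y => (f y - f r) / N)
        ((Real.log (1 - x) - Real.log x + c) / N) x := (hfd.sub_const (f r)).div_const N
    have hexp : HasDerivAt (fun y => Real.exp ((f y - f r) / N))
        (Real.exp ((f x - f r) / N) * ((Real.log (1 - x) - Real.log x + c) / N)) x := hΔd.exp
    have hmain := hDd.sub (((hexp.sub_const 1).sub hΔd).const_mul N)
    refine hmain.congr_deriv ?_
    field_simp
    ring
  -- deriv ψ sign via w antitone
  have hw := w_antitone c N hN hNs
  have hsign : ∀ x ∈ Set.Ioo (0:ℝ) 1,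
      (Real.log (1 - r) - Real.log r + c)
        - Real.exp ((f x - f r) / N) * (Real.log (1 - x) - Real.log x + c)
      = Real.exp (-(f r) / N) *
        (Real.exp (f r / N) * (Real.log (1 - r) - Real.log r + c)
          - Real.exp (f x / N) * (Real.log (1 - x) - Real.log x + c)) := by
    rintro x -
    rw [mul_sub, ← mul_assoc, ← mul_assoc, ← Real.exp_add, ← Real.exp_add]
    have e1 : -(f r) / N + f r / N = 0 := by ring
    have e2 : -(f r) / N + f x / N = (f x - f r) / N := by ring
    rw [e1, e2, Real.exp_zero]
    ring
  rcases le_or_gt r s with hrs | hrs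
  · -- monotone on [r, s]
    have hmono : MonotoneOn ψ (Set.Icc r s) := by
      apply monotoneOn_of_deriv_nonneg (convex_Icc r s) contψ.continuousOn
      · rw [interior_Icc]
        rintro x ⟨hx1, hx2⟩
        exact ((hders x ⟨lt_trans hr0 hx1, lt_trans hx2 hs1⟩).differentiableAt).differentiableWithinAt
      · rw [interior_Icc]
        rintro x ⟨hx1, hx2⟩
        have hx : x ∈ Set.Ioo (0:ℝ) 1 := ⟨lt_trans hr0 hx1, lt_trans hx2 hs1⟩
        rw [(hders x hx).deriv, hsign x hx]
        have hwle := hw ⟨hr0, hr1⟩ ⟨hx.1, hx.2⟩ hx1.le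
        have : (0:ℝ) < Real.exp (-(f r) / N) := Real.exp_pos _
        have := mul_nonneg this.le (sub_nonneg.mpr hwle)
        exact this
    have := hmono ⟨le_refl r, hrs⟩ ⟨hrs, le_refl s⟩ hrs
    rw [hψr] at this
    exact this
  · -- antitone on [s, r]
    have hanti : AntitoneOn ψ (Set.Icc s r) := by
      apply antitoneOn_of_deriv_nonpos (convex_Icc s r) contψ.continuousOn
      · rw [interior_Icc]
        rintro x ⟨hx1, hx2⟩
        exact ((hders x ⟨lt_of_le_of_lt hs0 hx1, lt_trans hx2 hr1⟩).differentiableAt).differentiableWithinAt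
      · rw [interior_Icc]
        rintro x ⟨hx1, hx2⟩
        have hx : x ∈ Set.Ioo (0:ℝ) 1 := ⟨lt_of_le_of_lt hs0 hx1, lt_trans hx2 hr1⟩
        rw [(hders x hx).deriv, hsign x hx]
        have hwle := hw ⟨hx.1, hx.2⟩ ⟨hr0, hr1⟩ hx2.le
        have hE : (0:ℝ) < Real.exp (-(f r) / N) := Real.exp_pos _
        exact mul_nonpos_of_nonneg_of_nonpos hE.le (sub_nonpos.mpr hwle)
    have := hanti ⟨le_refl s, hrs.le⟩ ⟨hrs.le, le_refl r⟩ hrs.le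
    rw [hψr] at this
    exact this


lemma Nfun_bdd (d : ℕ) (hd : 2 ≤ d) :
    BddAbove {v : ℝ | ∃ r : ℝ, 0 < r ∧ r < 1/2 ∧
      v = r * (1 - r) * (Real.log ((1 - r) / r * ((d:ℝ) - 1)))^2} := by
  use 8 + 2 * (Real.log ((d:ℝ) - 1))^2
  rintro v ⟨r, hr0, hr2, rfl⟩
  have h1r : (0:ℝ) < 1 - r := by linarith
  have hd1 : (1:ℝ) ≤ (d:ℝ) - 1 := by
    have : (2:ℝ) ≤ (d:ℝ) := by exact_mod_cast hd
    linarith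
  have hfrac : (0:ℝ) < (1 - r) / r := by positivity
  rw [Real.log_mul hfrac.ne' (by linarith)]
  set A := Real.log ((1 - r) / r) with hA'
  set B := Real.log ((d:ℝ) - 1) with hB'
  have hA : 0 ≤ A := Real.log_nonneg (by rw [le_div_iff₀ hr0]; linarith)
  have hB : 0 ≤ B := Real.log_nonneg hd1
  have hsq : Real.sqrt ((1 - r) / r) ^ 2 = (1 - r) / r := Real.sq_sqrt hfrac.le
  have hAle : A ≤ 2 * Real.sqrt ((1 - r) / r) := by
    have h := Real.log_le_sub_one_of_pos (Real.sqrt_pos.mpr hfrac)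
    have h2 : A = 2 * Real.log (Real.sqrt ((1 - r) / r)) := by
      rw [Real.log_sqrt hfrac.le]; ring
    linarith
  have hA2 : r * (1 - r) * A ^ 2 ≤ 4 := by
    have h1 : A ^ 2 ≤ 4 * ((1 - r) / r) := by
      have := pow_le_pow_left₀ hA hAle 2
      calc A ^ 2 ≤ (2 * Real.sqrt ((1 - r) / r)) ^ 2 := this
        _ = 4 * ((1 - r) / r) := by rw [mul_pow, hsq]; norm_num
    have h2 : r * (1 - r) * A ^ 2 ≤ r * (1 - r) * (4 * ((1 - r) / r)) := by
      apply mul_le_mul_of_nonneg_left h1 (by positivity)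
    calc r * (1 - r) * A ^ 2 ≤ r * (1 - r) * (4 * ((1 - r) / r)) := h2
      _ = 4 * (1 - r) ^ 2 := by field_simp
      _ ≤ 4 := by nlinarith
  have h1 : 0 ≤ r * (1 - r) * (A - B)^2 := by positivity
  have h2 : r * (1 - r) ≤ 1 := by nlinarith
  have h3 : r * (1 - r) * B^2 ≤ B^2 := by nlinarith [sq_nonneg B]
  nlinarith [h1, h3, hA2]

lemma Nfun_pos (d : ℕ) (hd : 2 ≤ d) : 0 < Nfun d := by
  have hd1 : (1:ℝ) ≤ (d:ℝ) - 1 := by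
    have : (2:ℝ) ≤ (d:ℝ) := by exact_mod_cast hd
    linarith
  have hmem : (1/4:ℝ) * (1 - 1/4) * (Real.log ((1 - 1/4) / (1/4) * ((d:ℝ) - 1)))^2 ∈
      {v : ℝ | ∃ r : ℝ, 0 < r ∧ r < 1/2 ∧
        v = r * (1 - r) * (Real.log ((1 - r) / r * ((d:ℝ) - 1)))^2} :=
    ⟨1/4, by norm_num, by norm_num, rfl⟩
  have hle := le_csSup (Nfun_bdd d hd) hmem
  have hval : (0:ℝ) < (1/4) * (1 - 1/4) * (Real.log ((1 - 1/4) / (1/4) * ((d:ℝ) - 1)))^2 := by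
    have h3 : (1 - 1/4 : ℝ) / (1/4) * ((d:ℝ) - 1) = 3 * ((d:ℝ) - 1) := by norm_num
    rw [h3]
    have hlog : 0 < Real.log (3 * ((d:ℝ) - 1)) := Real.log_pos (by nlinarith)
    positivity
  exact lt_of_lt_of_le hval hle

lemma Nfun_pointwise (d : ℕ) (hd : 2 ≤ d) (x : ℝ) (hx0 : 0 < x) (hx1 : x < 1) :
    x * (1 - x) * (Real.log (1 - x) - Real.log x + Real.log ((d:ℝ) - 1))^2 ≤ Nfun d := by
  have hd1 : (1:ℝ) ≤ (d:ℝ) - 1 := by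
    have : (2:ℝ) ≤ (d:ℝ) := by exact_mod_cast hd
    linarith
  have h1x : (0:ℝ) < 1 - x := by linarith
  set B := Real.log ((d:ℝ) - 1) with hB'
  have hB : 0 ≤ B := Real.log_nonneg hd1
  have hsplit : ∀ t : ℝ, 0 < t → t < 1 →
      Real.log ((1 - t) / t * ((d:ℝ) - 1)) = Real.log (1 - t) - Real.log t + B := by
    intro t ht0 ht1
    have h1t : (0:ℝ) < 1 - t := by linarith
    rw [Real.log_mul (by positivity) (by linarith), Real.log_div h1t.ne' ht0.ne']
  rcases lt_trichotomy x (1/2) with hc | hc | hc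
  · have hmem : x * (1 - x) * (Real.log ((1 - x) / x * ((d:ℝ) - 1)))^2 ∈
        {v : ℝ | ∃ r : ℝ, 0 < r ∧ r < 1/2 ∧
          v = r * (1 - r) * (Real.log ((1 - r) / r * ((d:ℝ) - 1)))^2} := ⟨x, hx0, hc, rfl⟩
    have := le_csSup (Nfun_bdd d hd) hmem
    rwa [hsplit x hx0 hx1] at this
  · -- x = 1/2 : limit argument
    subst hc
    set g : ℝ → ℝ := fun t => t * (1 - t) * (Real.log ((1 - t) / t * ((d:ℝ) - 1)))^2 with hg
    have hcont : ContinuousAt g (1/2 : ℝ) := by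
      have hval : ((1:ℝ) - 1/2) / (1/2) * ((d:ℝ) - 1) ≠ 0 := by
        have he : ((1:ℝ) - 1/2) / (1/2) * ((d:ℝ) - 1) = (d:ℝ) - 1 := by norm_num
        rw [he]; intro h; linarith
      have h1 : ContinuousAt (fun t : ℝ => (1 - t) / t * ((d:ℝ) - 1)) (1/2 : ℝ) :=
        (((continuousAt_const.sub continuousAt_id).div continuousAt_id
          (by norm_num)).mul continuousAt_const)
      have h2 : ContinuousAt (fun t : ℝ => Real.log ((1 - t) / t * ((d:ℝ) - 1))) (1/2 : ℝ) :=
        h1.log hval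
      exact (continuousAt_id.mul (continuousAt_const.sub continuousAt_id)).mul (h2.pow 2)
    have htend : Filter.Tendsto g (nhdsWithin (1/2 : ℝ) (Set.Iio (1/2))) (nhds (g (1/2))) :=
      hcont.continuousWithinAt.tendsto
    have hev : ∀ᶠ t in nhdsWithin (1/2 : ℝ) (Set.Iio (1/2)), g t ≤ Nfun d := by
      have h1 : ∀ᶠ t in nhdsWithin (1/2 : ℝ) (Set.Iio (1/2)), (0:ℝ) < t :=
        eventually_nhdsWithin_of_eventually_nhds (eventually_gt_nhds (by norm_num))
      filter_upwards [h1, self_mem_nhdsWithin] with t ht0 ht2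
      exact le_csSup (Nfun_bdd d hd) ⟨t, ht0, ht2, rfl⟩
    have hlim := le_of_tendsto htend hev
    have hgval : g (1/2) = (1/2 : ℝ) * (1 - 1/2) * (Real.log (1 - 1/2) - Real.log (1/2) + B)^2 := by
      rw [hg]
      simp only []
      rw [hsplit (1/2) (by norm_num) (by norm_num)]
    rw [← hgval]
    exact hlim
  · -- x > 1/2 : symmetry
    have ht0 : (0:ℝ) < 1 - x := h1x
    have ht2 : 1 - x < 1/2 := by linarith
    have hmem : (1 - x) * (1 - (1 - x)) * (Real.log ((1 - (1 - x)) / (1 - x) * ((d:ℝ) - 1)))^2 ∈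
        {v : ℝ | ∃ r : ℝ, 0 < r ∧ r < 1/2 ∧
          v = r * (1 - r) * (Real.log ((1 - r) / r * ((d:ℝ) - 1)))^2} := ⟨1 - x, ht0, ht2, rfl⟩
    have hle := le_csSup (Nfun_bdd d hd) hmem
    rw [hsplit (1 - x) ht0 (by linarith)] at hle
    have h1t : (1:ℝ) - (1 - x) = x := by ring
    rw [h1t] at hle
    have hA0 : 0 ≤ Real.log x - Real.log (1 - x) :=
      sub_nonneg.mpr (Real.log_le_log ht0 (by linarith))
    have hle2 : (1 - x) * x * (Real.log x - Real.log (1 - x) + B) ^ 2 ≤ Nfun d := hle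
    nlinarith [mul_nonneg (mul_nonneg hx0.le h1x.le)
      (mul_nonneg hA0 hB), hle2]

/-- pointwise exponential-type lower bound on the binary relative entropy. -/
theorem binRelEntropy_ge_exp_bound (d : ℕ) (hd : 2 ≤ d) (s r : ℝ)
    (hs : s ∈ Set.Icc (0:ℝ) (((d:ℝ) - 1) / d)) (hr : r ∈ Set.Icc (0:ℝ) (((d:ℝ) - 1) / d)) :
    ENNReal.ofReal (Nfun d *
        (Real.exp ((binEntropy' s - binEntropy' r + (s - r) * Real.log ((d:ℝ) - 1)) / Nfun d)
          - 1 - (binEntropy' s - binEntropy' r + (s - r) * Real.log ((d:ℝ) - 1)) / Nfun d))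
      ≤ binRelEntropy s r := by
  obtain ⟨hs0, hs2⟩ := hs
  obtain ⟨hr0, hr2⟩ := hr
  have hd2 : (2:ℝ) ≤ (d:ℝ) := by exact_mod_cast hd
  have hdpos : (0:ℝ) < (d:ℝ) := by linarith
  have hρ : ((d:ℝ) - 1) / (d:ℝ) < 1 := by rw [div_lt_one hdpos]; linarith
  have hs1 : s < 1 := lt_of_le_of_lt hs2 hρ
  have hr1 : r < 1 := lt_of_le_of_lt hr2 hρ
  unfold binRelEntropy
  split_ifs with h
  · exact le_top
  · rcases eq_or_lt_of_le hr0 with h0 | h0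
    · have hs0' : s = 0 := by
        by_contra hne
        exact h (Or.inl ⟨h0.symm, lt_of_le_of_ne hs0 (Ne.symm hne)⟩)
      subst hs0'
      rw [← h0]
      norm_num [binEntropy']
    · exact ENNReal.ofReal_le_ofReal
        (key (Real.log ((d:ℝ) - 1)) (Nfun d) (Nfun_pos d hd)
          (fun x hx0 hx1 => Nfun_pointwise d hd x hx0 hx1) s r hs0 hs1 h0 hr1)


end
end
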